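/- Fix an integer k ≥ 1 and define, for n ≥ k, r'(k,n) := 1 if p(k,n) = t(n) − 1 or split(n, p(k,n) + 1) holds, and r'(k,n) := 0 otherwise (the indicator that the k-th most recently appended leaf lies in the leftmost mountain of its range in the MMB structure on n leaves). Then liminf_{N→∞} (1/N)·Σ_{n=k}^{k+N−1} r'(k,n) ≥ 5/16; that is, the amortized value of r'(k,·) is at least 5/16. -/

import Mathlib

open Filter

/-- The `i`-th binary digit of `m`. -/
def bit (i m : ℕ) : ℕ := m / 2 ^ i % 2

/-- Position (from 0 at the right) of the mountain of the U-MMB structure on `n` leaves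
containing the `k`-th most recently appended leaf. -/
noncomputable def pos (k n : ℕ) : ℕ :=
  sInf {i : ℕ | k ≤ 2 ^ (i + 1) - 1 + (n + 1) % 2 ^ (i + 1)}

/-- `Split n i` holds iff there is a range split between the mountains at positions `i`
and `i−1` of the MMB structure on `n` leaves. -/
def Split (n i : ℕ) : Prop :=
  bit i (n + 1) = 1 ∧ (bit (i + 1) (n + 1) = 0 ∨ bit (i - 1) (n + 1) = 0)

instance (n i : ℕ) : Decidable (Split n i) := by unfold Split; infer_instance

/-- Indicator that the `k`-th most recently appended leaf lies in the leftmost mountain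
of its range in the MMB structure on `n` leaves. -/
noncomputable def rprime (k n : ℕ) : ℕ :=
  if pos k n = Nat.log 2 (n + 1) - 1 ∨ Split n (pos k n + 1) then 1 else 0

/-! ### Auxiliary development -/

lemma bit_add_pow {j s : ℕ} (h : j < s) (x : ℕ) : bit j (2 ^ s + x) = bit j x := by
  unfold bit
  have h1 : 2 ^ s = 2 ^ j * (2 * 2 ^ (s - j - 1)) := by
    rw [show 2 * 2 ^ (s - j - 1) = 2 ^ (s - j) by rw [← pow_succ']; congr 1; omega,
      ← pow_add]; congr 1; omega
  rw [add_comm, h1, Nat.add_mul_div_left _ _ (pow_pos (by norm_num) j),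
    Nat.add_mul_mod_self_left]

lemma pos_eq {k : ℕ} (hk : 1 ≤ k) (n : ℕ) :
    pos k n = if (n + 1) % 2 ^ (Nat.log 2 k) < k + 1 - 2 ^ (Nat.log 2 k)
      then Nat.log 2 k else Nat.log 2 k - 1 := by
  set P0 := Nat.log 2 k with hP0def
  set K := 2 ^ P0 with hKdef
  have hKk : K ≤ k := Nat.pow_log_le_self 2 (by omega)
  have hk2 : k < 2 * K := by
    have := Nat.lt_pow_succ_log_self (b := 2) (by norm_num) k
    rw [Nat.succ_eq_add_one, pow_succ, ← hP0def, ← hKdef] at this; omega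
  have hKpos : 0 < K := pow_pos (by norm_num) _
  unfold pos
  by_cases hm : (n + 1) % K < k + 1 - K
  · rw [if_pos hm]
    have hmem : P0 ∈ {i : ℕ | k ≤ 2 ^ (i + 1) - 1 + (n + 1) % 2 ^ (i + 1)} := by
      have h2 : (2:ℕ) ^ (P0 + 1) = 2 * K := by rw [pow_succ]; ring
      simp only [Set.mem_setOf_eq, h2]
      omega
    refine le_antisymm (Nat.sInf_le hmem) ?_
    by_contra hlt
    push_neg at hlt
    have hj := Nat.sInf_mem (⟨P0, hmem⟩ : {i : ℕ | k ≤ 2 ^ (i + 1) - 1 + (n + 1) % 2 ^ (i + 1)}.Nonempty)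
    set j := sInf {i : ℕ | k ≤ 2 ^ (i + 1) - 1 + (n + 1) % 2 ^ (i + 1)}
    simp only [Set.mem_setOf_eq] at hj
    have hdvd : (2:ℕ) ^ (j + 1) ∣ K := pow_dvd_pow 2 (by omega)
    have h1 : (n + 1) % 2 ^ (j + 1) ≤ (n + 1) % K := by
      rw [← Nat.mod_mod_of_dvd _ hdvd]; exact Nat.mod_le _ _
    have h2 : (2:ℕ) ^ (j + 1) ≤ K := Nat.pow_le_pow_right (by norm_num) (by omega)
    omega
  · rw [if_neg hm]
    have hmlt : (n + 1) % K < K := Nat.mod_lt _ hKpos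
    have hP1 : 1 ≤ P0 := by
      by_contra h
      have : P0 = 0 := by omega
      rw [this] at hKdef
      simp at hKdef
      omega
    have hmem : P0 - 1 ∈ {i : ℕ | k ≤ 2 ^ (i + 1) - 1 + (n + 1) % 2 ^ (i + 1)} := by
      have h2 : (2:ℕ) ^ (P0 - 1 + 1) = K := by rw [hKdef]; congr 1; omega
      simp only [Set.mem_setOf_eq, h2]
      omega
    refine le_antisymm (Nat.sInf_le hmem) ?_
    by_contra hlt
    push_neg at hlt
    have hj := Nat.sInf_mem (⟨P0 - 1, hmem⟩ : {i : ℕ | k ≤ 2 ^ (i + 1) - 1 + (n + 1) % 2 ^ (i + 1)}.Nonempty)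
    set j := sInf {i : ℕ | k ≤ 2 ^ (i + 1) - 1 + (n + 1) % 2 ^ (i + 1)}
    simp only [Set.mem_setOf_eq] at hj
    have h2 : (2:ℕ) ^ (j + 1) ≤ 2 ^ (P0 - 1) := Nat.pow_le_pow_right (by norm_num) (by omega)
    have h4 : 2 * 2 ^ (P0 - 1) = K := by rw [hKdef, ← pow_succ']; congr 1; omega
    have h5 : (n + 1) % 2 ^ (j + 1) < 2 ^ (j + 1) := Nat.mod_lt _ (pow_pos (by norm_num) _)
    omega

noncomputable def q (k n : ℕ) : ℕ := if Split n (pos k n + 1) then 1 else 0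

def good (k t : ℕ) : Prop :=
  if t % 2 ^ (Nat.log 2 k) < k + 1 - 2 ^ (Nat.log 2 k)
    then bit (Nat.log 2 k + 1) t = 1 ∧ (bit (Nat.log 2 k + 2) t = 0 ∨ bit (Nat.log 2 k) t = 0)
    else bit (Nat.log 2 k) t = 1 ∧
      (bit (Nat.log 2 k + 1) t = 0 ∨ bit (Nat.log 2 k - 1) t = 0)

instance (k t : ℕ) : Decidable (good k t) := by unfold good; infer_instance

lemma q_shift {k : ℕ} (hk : 1 ≤ k) (n : ℕ) :
    q k (n + 8 * 2 ^ Nat.log 2 k) = q k n := by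
  set P0 := Nat.log 2 k with hP0
  have hKpos : 0 < 2 ^ P0 := pow_pos (by norm_num) _
  have h8 : n + 8 * 2 ^ P0 + 1 = 2 ^ (P0 + 3) + (n + 1) := by
    have : (2:ℕ) ^ (P0 + 3) = 2 ^ P0 * 8 := by rw [pow_add]; norm_num
    omega
  have hpos : pos k (n + 8 * 2 ^ P0) = pos k n := by
    rw [pos_eq hk, pos_eq hk,
      show n + 8 * 2 ^ P0 + 1 = n + 1 + 2 ^ P0 * 8 by ring, Nat.add_mul_mod_self_left]
  have hple : pos k n ≤ P0 := by rw [pos_eq hk]; split <;> omega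
  have hb : ∀ j, j ≤ P0 + 2 → bit j (n + 8 * 2 ^ P0 + 1) = bit j (n + 1) := by
    intro j hj; rw [h8]; exact bit_add_pow (by omega) _
  have hiff : Split (n + 8 * 2 ^ P0) (pos k (n + 8 * 2 ^ P0) + 1) ↔ Split n (pos k n + 1) := by
    rw [hpos]
    unfold Split
    rw [hb (pos k n + 1) (by omega), hb (pos k n + 1 + 1) (by omega),
      hb (pos k n + 1 - 1) (by omega)]
  unfold q
  exact if_congr hiff rfl rfl

lemma q_eq_good {k : ℕ} (hk : 1 ≤ k) (t : ℕ) :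
    q k (8 * 2 ^ Nat.log 2 k - 1 + t) = if good k t then 1 else 0 := by
  set P0 := Nat.log 2 k with hP0
  have hKpos : 0 < 2 ^ P0 := pow_pos (by norm_num) _
  have h8 : 8 * 2 ^ P0 - 1 + t + 1 = 2 ^ (P0 + 3) + t := by
    have : (2:ℕ) ^ (P0 + 3) = 2 ^ P0 * 8 := by rw [pow_add]; norm_num
    omega
  have hmod : (8 * 2 ^ P0 - 1 + t + 1) % 2 ^ P0 = t % 2 ^ P0 := by
    rw [show 8 * 2 ^ P0 - 1 + t + 1 = t + 2 ^ P0 * 8 by omega, Nat.add_mul_mod_self_left]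
  have hb : ∀ j, j ≤ P0 + 2 → bit j (8 * 2 ^ P0 - 1 + t + 1) = bit j t := by
    intro j hj; rw [h8]; exact bit_add_pow (by omega) _
  have hiff : Split (8 * 2 ^ P0 - 1 + t) (pos k (8 * 2 ^ P0 - 1 + t) + 1) ↔ good k t := by
    rw [pos_eq hk, hmod]
    unfold good
    by_cases hm : t % 2 ^ P0 < k + 1 - 2 ^ P0
    · rw [if_pos hm, if_pos hm]
      unfold Split
      rw [hb (P0 + 1) (by omega), hb (P0 + 1 + 1) (by omega), hb (P0 + 1 - 1) (by omega)]
      exact Iff.rfl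
    · rw [if_neg hm, if_neg hm]
      have hP1 : 1 ≤ P0 := by
        by_contra h
        have h0 : P0 = 0 := by omega
        rw [h0] at hm
        simp at hm
        omega
      rw [show P0 - 1 + 1 = P0 by omega]
      unfold Split
      rw [hb P0 (by omega), hb (P0 + 1) (by omega), hb (P0 - 1) (by omega)]
  unfold q
  exact if_congr hiff rfl rfl

lemma sum_range_mul (f : ℕ → ℕ) (K : ℕ) :
    ∀ c, ∑ t ∈ Finset.range (c * K), f t
      = ∑ i ∈ Finset.range c, ∑ m ∈ Finset.range K, f (i * K + m) := by
  intro c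
  induction c with
  | zero => simp
  | succ c ih =>
      rw [show (c + 1) * K = c * K + K by ring, Finset.sum_range_add, ih,
        Finset.sum_range_succ]

lemma bit_mul_add_high {P0 i : ℕ} (c m : ℕ) (hm : m < 2 ^ P0) (hi : P0 ≤ i) :
    bit i (c * 2 ^ P0 + m) = bit (i - P0) c := by
  unfold bit
  rw [show c * 2 ^ P0 + m = m + 2 ^ P0 * c by ring,
    show (2:ℕ) ^ i = 2 ^ P0 * 2 ^ (i - P0) by rw [← pow_add]; congr 1; omega,
    ← Nat.div_div_eq_div_mul, Nat.add_mul_div_left _ _ (pow_pos (by norm_num) _),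
    Nat.div_eq_of_lt hm, zero_add]

lemma bit_mul_add_low {P0 i : ℕ} (c m : ℕ) (hi : i < P0) :
    bit i (c * 2 ^ P0 + m) = bit i m := by
  unfold bit
  rw [show c * 2 ^ P0 + m = m + 2 ^ i * (2 * (2 ^ (P0 - i - 1) * c)) by
      rw [show (2:ℕ) ^ P0 = 2 ^ i * (2 * 2 ^ (P0 - i - 1)) by
        rw [show 2 * 2 ^ (P0 - i - 1) = 2 ^ (P0 - i) by rw [← pow_succ']; congr 1; omega,
          ← pow_add]; congr 1; omega]; ring,
    Nat.add_mul_div_left _ _ (pow_pos (by norm_num) _),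
    Nat.add_mul_mod_self_left]

lemma counting {k : ℕ} (hk : 1 ≤ k) :
    5 * (8 * 2 ^ Nat.log 2 k)
      ≤ 16 * ∑ t ∈ Finset.range (8 * 2 ^ Nat.log 2 k), (if good k t then 1 else 0) := by
  set P0 := Nat.log 2 k with hP0
  set K := 2 ^ P0 with hKdef
  set b := k + 1 - K with hbdef
  set H := 2 ^ (P0 - 1) with hHdef
  have hKk : K ≤ k := Nat.pow_log_le_self 2 (by omega)
  have hk2 : k < 2 * K := by
    have := Nat.lt_pow_succ_log_self (b := 2) (by norm_num) k
    rw [Nat.succ_eq_add_one, pow_succ, ← hP0, ← hKdef] at this; omega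
  have hKpos : 0 < K := pow_pos (by norm_num) _
  have hb1 : 1 ≤ b := by omega
  have hbK : b ≤ K := by omega
  have hHK : K = 2 * H ∨ (P0 = 0 ∧ K = 1 ∧ H = 1) := by
    rcases Nat.eq_zero_or_pos P0 with h | h
    · right; simp [hKdef, hHdef, h]
    · left; rw [hKdef, hHdef, ← pow_succ']; congr 1; omega
  have hHleK : H ≤ K := Nat.pow_le_pow_right (by norm_num) (by omega)
  have e1 : (2:ℕ) ^ Nat.log 2 k = K := rfl
  have e2 : k + 1 - K = b := rfl
  have e3 : Nat.log 2 k = P0 := rfl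
  -- pointwise bit computations
  have hcond : ∀ c m : ℕ, m < K → (c * K + m) % K = m := by
    intro c m hm
    rw [show c * K + m = K * c + m by ring, Nat.mul_add_mod, Nat.mod_eq_of_lt hm]
  have hbH : ∀ c m i : ℕ, m < K → P0 ≤ i → bit i (c * K + m) = bit (i - P0) c := by
    intro c m i hm hi
    rw [hKdef] at hm ⊢
    exact bit_mul_add_high c m hm hi
  -- per-c goodness
  have good1 : ∀ c : ℕ, bit 0 c = 1 → bit 1 c = 0 → ∀ m, b ≤ m → m < K → good k (c * K + m) := by
    intro c h0 h1 m hbm hm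
    unfold good
    rw [e1, e2, e3, hcond c m hm, if_neg (by omega)]
    refine ⟨?_, Or.inl ?_⟩
    · rw [hbH c m P0 hm (le_refl _), Nat.sub_self]; exact h0
    · rw [hbH c m (P0 + 1) hm (by omega), Nat.add_sub_cancel_left]; exact h1
  have good2 : ∀ c : ℕ, bit 1 c = 1 → bit 2 c = 0 → ∀ m, m < b → good k (c * K + m) := by
    intro c h1 h2 m hmb
    unfold good
    rw [e1, e2, e3, hcond c m (by omega), if_pos (by omega)]
    refine ⟨?_, Or.inl ?_⟩
    · rw [hbH c m (P0 + 1) (by omega) (by omega), Nat.add_sub_cancel_left]; exact h1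
    · rw [hbH c m (P0 + 2) (by omega) (by omega), Nat.add_sub_cancel_left]; exact h2
  have good6 : ∀ m, m < b → good k (6 * K + m) := by
    intro m hmb
    unfold good
    rw [e1, e2, e3, hcond 6 m (by omega), if_pos (by omega)]
    refine ⟨?_, Or.inr ?_⟩
    · rw [hbH 6 m (P0 + 1) (by omega) (by omega), Nat.add_sub_cancel_left]; decide
    · rw [hbH 6 m P0 (by omega) (le_refl _), Nat.sub_self]; decide
  have good3 : ∀ m, m < H → good k (3 * K + m) := by
    intro m hmH
    have hmK : m < K := lt_of_lt_of_le hmH hHleK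
    by_cases hmb : m < b
    · exact good2 3 (by decide) (by decide) m hmb
    · have hP1 : 1 ≤ P0 := by
        by_contra h
        have : P0 = 0 := by omega
        rw [this] at hHdef
        simp at hHdef
        omega
      unfold good
      rw [e1, e2, e3, hcond 3 m hmK, if_neg (by omega)]
      refine ⟨?_, Or.inr ?_⟩
      · rw [hbH 3 m P0 hmK (le_refl _), Nat.sub_self]; decide
      · rw [show (3 : ℕ) * K + m = 3 * 2 ^ P0 + m by rw [hKdef],
          bit_mul_add_low 3 m (by omega : P0 - 1 < P0)]
        unfold bit
        rw [← hHdef, Nat.div_eq_of_lt hmH]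
  -- sum lower bound machinery
  have key : ∀ (c s e : ℕ), e ≤ K → (∀ m, s ≤ m → m < e → good k (c * K + m)) →
      e - s ≤ ∑ m ∈ Finset.range K, (if good k (c * K + m) then 1 else 0) := by
    intro c s e heK hgood
    have h1 : (∑ m ∈ Finset.Ico s e, if good k (c * K + m) then 1 else 0) = e - s := by
      have h2 : ∀ m ∈ Finset.Ico s e, (if good k (c * K + m) then 1 else 0) = 1 := by
        intro m hm
        rw [Finset.mem_Ico] at hm
        rw [if_pos (hgood m hm.1 hm.2)]
      rw [Finset.sum_congr rfl h2, Finset.sum_const, smul_eq_mul, mul_one, Nat.card_Ico]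
    rw [← h1]
    refine Finset.sum_le_sum_of_subset ?_
    intro x hx
    rw [Finset.mem_Ico] at hx
    rw [Finset.mem_range]
    omega
  -- assemble
  rw [sum_range_mul, Finset.sum_range_succ, Finset.sum_range_succ, Finset.sum_range_succ,
    Finset.sum_range_succ, Finset.sum_range_succ, Finset.sum_range_succ, Finset.sum_range_succ,
    Finset.sum_range_succ, Finset.sum_range_zero]
  have g1 := key 1 b K (le_refl _) (good1 1 (by decide) (by decide))
  have g5 := key 5 b K (le_refl _) (good1 5 (by decide) (by decide))
  have g2 := key 2 0 b hbK (fun m _ hm => good2 2 (by decide) (by decide) m hm)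
  have g6 := key 6 0 b hbK (fun m _ hm => good6 m hm)
  have g3 := key 3 0 H hHleK (fun m _ hm => good3 m hm)
  omega

lemma q_le_rprime (k n : ℕ) : q k n ≤ rprime k n := by
  unfold q rprime
  by_cases h : Split n (pos k n + 1) <;> simp [h]

lemma rprime_le_one (k n : ℕ) : rprime k n ≤ 1 := by
  unfold rprime; split <;> omega

lemma window {k : ℕ} (hk : 1 ≤ k) (n0 : ℕ) :
    ∑ j ∈ Finset.range (8 * 2 ^ Nat.log 2 k), q k (n0 + j)
      = ∑ j ∈ Finset.range (8 * 2 ^ Nat.log 2 k), q k j := by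
  set M := 8 * 2 ^ Nat.log 2 k with hM
  induction n0 with
  | zero => simp only [zero_add]
  | succ n0 ih =>
      have h1 := Finset.sum_range_succ (fun j => q k (n0 + j)) M
      have h2 := Finset.sum_range_succ' (fun j => q k (n0 + j)) M
      have h3 : q k (n0 + M) = q k n0 := q_shift hk n0
      have h5 : ∑ j ∈ Finset.range M, q k (n0 + (j + 1))
          = ∑ j ∈ Finset.range M, q k (n0 + 1 + j) :=
        Finset.sum_congr rfl (fun j _ => by rw [show n0 + (j + 1) = n0 + 1 + j by omega])
      simp only [Nat.add_zero] at h1 h2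
      omega

lemma qmultiples {k : ℕ} (hk : 1 ≤ k) (D : ℕ) :
    ∑ j ∈ Finset.range (D * (8 * 2 ^ Nat.log 2 k)), q k (k + j)
      = D * ∑ j ∈ Finset.range (8 * 2 ^ Nat.log 2 k), q k j := by
  set M := 8 * 2 ^ Nat.log 2 k with hM
  induction D with
  | zero => simp
  | succ D ih =>
      rw [show (D + 1) * M = D * M + M by ring, Finset.sum_range_add, ih]
      have h4 : ∀ j, k + (D * M + j) = (k + D * M) + j := by omega
      simp only [h4]
      rw [window hk (k + D * M)]
      ring

lemma C_lower {k : ℕ} (hk : 1 ≤ k) :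
    5 * (8 * 2 ^ Nat.log 2 k) ≤ 16 * ∑ j ∈ Finset.range (8 * 2 ^ Nat.log 2 k), q k j := by
  have h1 := window hk (8 * 2 ^ Nat.log 2 k - 1)
  have h2 : ∀ j, (8 * 2 ^ Nat.log 2 k - 1) + j = 8 * 2 ^ Nat.log 2 k - 1 + j := fun _ => rfl
  have h3 : ∑ j ∈ Finset.range (8 * 2 ^ Nat.log 2 k), q k (8 * 2 ^ Nat.log 2 k - 1 + j)
      = ∑ j ∈ Finset.range (8 * 2 ^ Nat.log 2 k), (if good k j then 1 else 0) :=
    Finset.sum_congr rfl (fun j _ => q_eq_good hk j)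
  rw [← h1, h3]
  exact counting hk

lemma sum_lower {k : ℕ} (hk : 1 ≤ k) (N : ℕ) :
    (N / (8 * 2 ^ Nat.log 2 k)) * (∑ j ∈ Finset.range (8 * 2 ^ Nat.log 2 k), q k j)
      ≤ ∑ n ∈ Finset.Ico k (k + N), rprime k n := by
  set M := 8 * 2 ^ Nat.log 2 k with hM
  calc (N / M) * (∑ j ∈ Finset.range M, q k j)
      = ∑ j ∈ Finset.range ((N / M) * M), q k (k + j) := (qmultiples hk (N / M)).symm
    _ ≤ ∑ j ∈ Finset.range N, q k (k + j) := by
        refine Finset.sum_le_sum_of_subset ?_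
        refine Finset.range_subset_range.mpr ?_
        exact Nat.div_mul_le_self N M
    _ ≤ ∑ j ∈ Finset.range N, rprime k (k + j) :=
        Finset.sum_le_sum (fun j _ => q_le_rprime k (k + j))
    _ = ∑ n ∈ Finset.Ico k (k + N), rprime k n := by
        rw [Finset.sum_Ico_eq_sum_range]
        simp

/-- The amortized value of the indicator that the `k`-th newest leaf lies in the
leftmost mountain of its range is at least `5/16`. -/
theorem mmb_leftmost_indicator_liminf (k : ℕ) (hk : 1 ≤ k) :
    (5 / 16 : ℝ) ≤
      Filter.liminf
        (fun N : ℕ => (N : ℝ)⁻¹ * ∑ n ∈ Finset.Ico k (k + N), (rprime k n : ℝ))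
        atTop := by
  set M := 8 * 2 ^ Nat.log 2 k with hM
  set C := ∑ j ∈ Finset.range M, q k j with hC
  have hMpos : 0 < M := by positivity
  have hCM : 5 * M ≤ 16 * C := C_lower hk
  set A : ℕ → ℝ := fun N => (N : ℝ)⁻¹ * ∑ n ∈ Finset.Ico k (k + N), (rprime k n : ℝ) with hA
  set B : ℕ → ℝ := fun N => (N : ℝ)⁻¹ * (((N / M : ℕ) : ℝ) * (C : ℝ)) with hB
  -- B ≤ A pointwise
  have hBA : ∀ N, B N ≤ A N := by
    intro N
    have h1 : ((N / M : ℕ) : ℝ) * (C : ℝ) ≤ ∑ n ∈ Finset.Ico k (k + N), (rprime k n : ℝ) := by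
      have := sum_lower hk N
      push_cast
      exact_mod_cast this
    exact mul_le_mul_of_nonneg_left h1 (by positivity)
  -- B tends to C / M
  have hMR : (0:ℝ) < M := by exact_mod_cast hMpos
  have hCR : (0:ℝ) ≤ C := by positivity
  have hBtend : Tendsto B atTop (nhds ((C : ℝ) / M)) := by
    have hlow : Tendsto (fun N : ℕ => (C : ℝ) / M - (C : ℝ) * (1 / N)) atTop
        (nhds ((C : ℝ) / M)) := by
      have h2 : Tendsto (fun N : ℕ => (C : ℝ) / M - (C : ℝ) * (1 / N)) atTop
          (nhds ((C : ℝ) / M - (C : ℝ) * 0)) :=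
        Tendsto.sub tendsto_const_nhds (tendsto_one_div_atTop_nhds_zero_nat.const_mul _)
      simpa using h2
    refine tendsto_of_tendsto_of_tendsto_of_le_of_le' hlow tendsto_const_nhds ?_ ?_
    · filter_upwards [eventually_ge_atTop 1] with N hN
      have hN0 : (0 : ℝ) < N := by exact_mod_cast hN
      have h5 : N < M * (N / M) + M := by
        have h5a := Nat.mod_lt N hMpos
        have h5b := Nat.div_add_mod N M
        omega
      have h6 : (N : ℝ) ≤ M * ((N / M : ℕ) : ℝ) + M := by
        have : (N : ℝ) < M * ((N / M : ℕ) : ℝ) + M := by exact_mod_cast h5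
        linarith
      show (C : ℝ) / M - (C : ℝ) * (1 / N) ≤ (N : ℝ)⁻¹ * (((N / M : ℕ) : ℝ) * C)
      rw [sub_le_iff_le_add, div_le_iff₀ hMR]
      have expand : ((N : ℝ)⁻¹ * (((N / M : ℕ) : ℝ) * C) + C * (1 / N)) * M
          = (M * ((N / M : ℕ) : ℝ) + M) * (C / N) := by
        field_simp
      rw [expand]
      calc (C : ℝ) = N * (C / N) := by field_simp
        _ ≤ (M * ((N / M : ℕ) : ℝ) + M) * (C / N) := by
            apply mul_le_mul_of_nonneg_right h6 (by positivity)
    · filter_upwards [eventually_ge_atTop 1] with N hN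
      have hN0 : (0 : ℝ) < N := by exact_mod_cast hN
      show (N : ℝ)⁻¹ * (((N / M : ℕ) : ℝ) * C) ≤ (C : ℝ) / M
      have h7 : ((N / M : ℕ) : ℝ) ≤ (N : ℝ) / M := Nat.cast_div_le
      calc (N : ℝ)⁻¹ * (((N / M : ℕ) : ℝ) * C) ≤ (N : ℝ)⁻¹ * ((N : ℝ) / M * C) := by
            apply mul_le_mul_of_nonneg_left (mul_le_mul_of_nonneg_right h7 hCR) (by positivity)
        _ = (C : ℝ) / M := by field_simp
  -- A is bounded above by 1
  have hA1 : ∀ N, A N ≤ 1 := by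
    intro N
    have hsum : (∑ n ∈ Finset.Ico k (k + N), (rprime k n : ℝ)) ≤ N := by
      calc (∑ n ∈ Finset.Ico k (k + N), (rprime k n : ℝ))
          ≤ ∑ n ∈ Finset.Ico k (k + N), (1 : ℝ) :=
            Finset.sum_le_sum (fun n _ => by exact_mod_cast rprime_le_one k n)
        _ = N := by simp
    rcases Nat.eq_zero_or_pos N with h | h
    · simp [hA, h]
    · have hN0 : (0 : ℝ) < N := by exact_mod_cast h
      have : A N ≤ (N : ℝ)⁻¹ * N := by
        apply mul_le_mul_of_nonneg_left hsum (by positivity)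
      rwa [inv_mul_cancel₀ hN0.ne'] at this
  -- conclude
  have hBA' : ∀ᶠ N in atTop, B N ≤ A N := Eventually.of_forall hBA
  have hlim : liminf B atTop ≤ liminf A atTop := by
    refine liminf_le_liminf hBA' ?_ ?_
    · exact hBtend.isBoundedUnder_ge
    · exact (isBoundedUnder_of ⟨1, fun N => hA1 N⟩).isCoboundedUnder_ge
  rw [hBtend.liminf_eq] at hlim
  refine le_trans ?_ hlim
  rw [div_le_div_iff₀ (by norm_num) hMR]
  have : (5 : ℝ) * M ≤ 16 * C := by exact_mod_cast hCM
  linarith
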